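/- The twistor lift lies on the quadric X₀X₃ = X₁X₂ exactly for real slice functions: let f : ℍ∖ℝ → ℍ be a slice regular function induced by the stem function (F₁, F₂) on ℂ∖ℝ. For u in the real span of {1, i} in ℍ and α + iβ ∈ ℂ∖ℝ with β > 0, set I = (1 + u·j)⁻¹·i·(1 + u·j) ∈ 𝕊 and write (1 + u·j)·f(α + Iβ) = X₂ + X₃·j with X₂, X₃ in the real span of {1, i} (this decomposition is unique). Then X₃ = u·X₂ holds for all such u and all α + iβ with β > 0 if and only if F₁ and F₂ take values in ℝ ⊆ ℍ (i.e. f is a real slice function). -/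

import Mathlib

/-- The quaternion imaginary unit `i`. -/
noncomputable def qi : Quaternion ℝ := ⟨0, 1, 0, 0⟩

/-- The quaternion imaginary unit `j`. -/
noncomputable def qj : Quaternion ℝ := ⟨0, 0, 1, 0⟩

open Quaternion

noncomputable def mk2 (x y : ℝ) : Quaternion ℝ := ⟨x, y, 0, 0⟩

@[simp] lemma qi_re : qi.re = 0 := rfl
@[simp] lemma qi_imI : qi.imI = 1 := rfl
@[simp] lemma qi_imJ : qi.imJ = 0 := rfl
@[simp] lemma qi_imK : qi.imK = 0 := rfl
@[simp] lemma qj_re : qj.re = 0 := rfl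
@[simp] lemma qj_imI : qj.imI = 0 := rfl
@[simp] lemma qj_imJ : qj.imJ = 1 := rfl
@[simp] lemma qj_imK : qj.imK = 0 := rfl
@[simp] lemma mk2_re (x y : ℝ) : (mk2 x y).re = x := rfl
@[simp] lemma mk2_imI (x y : ℝ) : (mk2 x y).imI = y := rfl
@[simp] lemma mk2_imJ (x y : ℝ) : (mk2 x y).imJ = 0 := rfl
@[simp] lemma mk2_imK (x y : ℝ) : (mk2 x y).imK = 0 := rfl

lemma qi_sq : qi * qi = -1 := by ext <;> simp [Quaternion.ext_iff]

lemma mem_span_iff (u : Quaternion ℝ) :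
    u ∈ Submodule.span ℝ ({1, qi} : Set (Quaternion ℝ)) ↔ u.imJ = 0 ∧ u.imK = 0 := by
  rw [Submodule.mem_span_pair]
  constructor
  · rintro ⟨s, t, rfl⟩
    simp
  · rintro ⟨hJ, hK⟩
    exact ⟨u.re, u.imI, by ext <;> simp [hJ, hK]⟩

lemma mk2_mem (x y : ℝ) : mk2 x y ∈ Submodule.span ℝ ({1, qi} : Set (Quaternion ℝ)) :=
  (mem_span_iff _).2 ⟨rfl, rfl⟩

lemma mk2_decomp (P : Quaternion ℝ) : mk2 P.re P.imI + mk2 P.imJ P.imK * qj = P := by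
  ext <;> simp

lemma q_ne (u : Quaternion ℝ) (hJ : u.imJ = 0) : (1 + u * qj) ≠ 0 := by
  intro h
  have := congrArg QuaternionAlgebra.re h
  simp [hJ] at this

lemma qI_eq (u : Quaternion ℝ) (hJ : u.imJ = 0) :
    (1 + u * qj) * ((1 + u * qj)⁻¹ * qi * (1 + u * qj)) = qi * (1 + u * qj) := by
  rw [← mul_assoc, ← mul_assoc, mul_inv_cancel₀ (q_ne u hJ), one_mul]

lemma I_sq (u : Quaternion ℝ) (hJ : u.imJ = 0) :
    ((1 + u * qj)⁻¹ * qi * (1 + u * qj)) ^ 2 = -1 := by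
  set q := 1 + u * qj with hq
  have hne := q_ne u hJ
  rw [pow_two]
  calc q⁻¹ * qi * q * (q⁻¹ * qi * q) = q⁻¹ * qi * (q * q⁻¹) * (qi * q) := by
        simp only [mul_assoc]
    _ = q⁻¹ * (qi * qi) * q := by rw [mul_inv_cancel₀ hne]; simp only [mul_one, mul_assoc]
    _ = -(q⁻¹ * q) := by rw [qi_sq]; simp [mul_assoc]
    _ = -1 := by rw [inv_mul_cancel₀ hne]

lemma prod_eq (u A C : Quaternion ℝ) (hJ : u.imJ = 0) :
    (1 + u * qj) * (A + ((1 + u * qj)⁻¹ * qi * (1 + u * qj)) * C)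
      = (1 + u * qj) * A + qi * ((1 + u * qj) * C) := by
  rw [mul_add, ← mul_assoc, qI_eq u hJ, mul_assoc]

set_option maxHeartbeats 1000000 in
/-- **The twistor lift lies on the quadric `X₀X₃ = X₁X₂` exactly for real slice
functions**: writing `(1 + u·j)·f(α + Iβ) = X₂ + X₃·j` with
`I = (1 + u·j)⁻¹·i·(1 + u·j)`, the relation `X₃ = u·X₂` holds for all `u` in the
real span of `{1, i}` and all `α + iβ` with `β > 0` iff `F₁, F₂` are real
valued. -/
theorem twistor_lift_on_quadric_iff_real
    (F₁ F₂ : ℂ → Quaternion ℝ)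
    (hstem : ∀ z : ℂ, z.im ≠ 0 →
      F₁ ((starRingEnd ℂ) z) = F₁ z ∧ F₂ ((starRingEnd ℂ) z) = - F₂ z)
    (f : Quaternion ℝ → Quaternion ℝ)
    (hslice : ∀ z : ℂ, z.im ≠ 0 → ∀ I : Quaternion ℝ, I ^ 2 = -1 →
      f ((z.re : Quaternion ℝ) + I * (z.im : Quaternion ℝ)) = F₁ z + I * F₂ z)
    (hreg : ∀ z : ℂ, z.im ≠ 0 → ∃ D₁ D₂ : ℂ →L[ℝ] Quaternion ℝ,
      HasFDerivAt F₁ D₁ z ∧ HasFDerivAt F₂ D₂ z ∧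
      D₁ 1 = D₂ Complex.I ∧ D₁ Complex.I = - D₂ 1) :
    (∀ u ∈ Submodule.span ℝ ({1, qi} : Set (Quaternion ℝ)),
      ∀ z : ℂ, 0 < z.im →
        ∀ X₂ X₃ : Quaternion ℝ,
          X₂ ∈ Submodule.span ℝ ({1, qi} : Set (Quaternion ℝ)) →
          X₃ ∈ Submodule.span ℝ ({1, qi} : Set (Quaternion ℝ)) →
          (1 + u * qj) *
              f ((z.re : Quaternion ℝ)
                  + ((1 + u * qj)⁻¹ * qi * (1 + u * qj)) * (z.im : Quaternion ℝ))
            = X₂ + X₃ * qj →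
          X₃ = u * X₂)
    ↔
    (∀ z : ℂ, z.im ≠ 0 →
      (∃ r : ℝ, F₁ z = (r : Quaternion ℝ)) ∧ (∃ r : ℝ, F₂ z = (r : Quaternion ℝ))) := by
  constructor
  · intro H
    have main : ∀ z : ℂ, 0 < z.im →
        (∃ r : ℝ, F₁ z = (r : Quaternion ℝ)) ∧ (∃ r : ℝ, F₂ z = (r : Quaternion ℝ)) := by
      intro z hz
      have hz' : z.im ≠ 0 := ne_of_gt hz
      set A := F₁ z with hA
      set C := F₂ z with hC
      have key : ∀ u : Quaternion ℝ, u.imJ = 0 → u.imK = 0 →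
          mk2 ((1 + u * qj) * A + qi * ((1 + u * qj) * C)).imJ
              ((1 + u * qj) * A + qi * ((1 + u * qj) * C)).imK
            = u * mk2 ((1 + u * qj) * A + qi * ((1 + u * qj) * C)).re
                ((1 + u * qj) * A + qi * ((1 + u * qj) * C)).imI := by
        intro u hJ hK
        have hf := hslice z hz' _ (I_sq u hJ)
        have hP : (1 + u * qj) *
            f ((z.re : Quaternion ℝ)
                + ((1 + u * qj)⁻¹ * qi * (1 + u * qj)) * (z.im : Quaternion ℝ))
            = (1 + u * qj) * A + qi * ((1 + u * qj) * C) := by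
          rw [hf, ← hA, ← hC, prod_eq u A C hJ]
        have := H u ((mem_span_iff u).2 ⟨hJ, hK⟩) z hz
          (mk2 ((1 + u * qj) * A + qi * ((1 + u * qj) * C)).re
            ((1 + u * qj) * A + qi * ((1 + u * qj) * C)).imI)
          (mk2 ((1 + u * qj) * A + qi * ((1 + u * qj) * C)).imJ
            ((1 + u * qj) * A + qi * ((1 + u * qj) * C)).imK)
          (mk2_mem _ _) (mk2_mem _ _) (by rw [hP, mk2_decomp])
        exact this
      have e0 := key 0 (by simp) (by simp)
      have e1 := key 1 (by simp) (by simp)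
      have e2 := key (-1) (by simp) (by simp)
      simp only [Quaternion.ext_iff] at e0 e1 e2
      simp at e0 e1 e2
      obtain ⟨f01, f02⟩ := e0
      obtain ⟨f11, f12⟩ := e1
      obtain ⟨f21, f22⟩ := e2
      constructor
      · exact ⟨A.re, by ext <;> simp [Quaternion.ext_iff] <;> linarith⟩
      · exact ⟨C.re, by ext <;> simp [Quaternion.ext_iff] <;> linarith⟩
    intro z hz
    rcases lt_or_gt_of_ne hz with h | h
    · have hzc : (0:ℝ) < ((starRingEnd ℂ) z).im := by simpa using neg_pos.2 h
      obtain ⟨⟨r₁, h₁⟩, ⟨r₂, h₂⟩⟩ := main _ hzc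
      obtain ⟨s₁, s₂⟩ := hstem z hz
      refine ⟨⟨r₁, by rw [← s₁, h₁]⟩, ⟨-r₂, ?_⟩⟩
      have : F₂ z = - F₂ ((starRingEnd ℂ) z) := by rw [s₂, neg_neg]
      rw [this, h₂]
      push_cast
      ring
    · exact main z h
  · intro H u hu z hz X₂ X₃ hX₂ hX₃ heq
    obtain ⟨uJ, uK⟩ := (mem_span_iff u).1 hu
    obtain ⟨X₂J, X₂K⟩ := (mem_span_iff X₂).1 hX₂
    obtain ⟨X₃J, X₃K⟩ := (mem_span_iff X₃).1 hX₃
    have hz' : z.im ≠ 0 := ne_of_gt hz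
    obtain ⟨⟨r₁, h₁⟩, ⟨r₂, h₂⟩⟩ := H z hz'
    have hf := hslice z hz' _ (I_sq u uJ)
    rw [hf, h₁, h₂, prod_eq u _ _ uJ] at heq
    simp only [Quaternion.ext_iff] at heq ⊢
    clear hf hslice hstem hreg H
    simp [uJ, uK, X₂J, X₂K, X₃J, X₃K, Quaternion.re_coe, Quaternion.imI_coe,
      Quaternion.imJ_coe, Quaternion.imK_coe] at heq
    simp [uJ, uK, X₂J, X₂K, X₃J, X₃K]
    obtain ⟨g1, g2, g3, g4⟩ := heq
    subst g1 g2
    exact ⟨by linarith, by linarith⟩
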